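/- Let (L_α)_{α<κ} be an inverse system of complete lattices whose projections h^α_β : L_α → L_β are all locally completely additive. Then the limit projections h^∞_β : L_∞ → L_β of the inverse limit L_∞ are also locally completely additive. -/

import Mathlib

universe u

abbrev Idx (κ : Ordinal) := {α : Ordinal // α < κ}

def Compat {κ : Ordinal} (L : Idx κ → Type u) [∀ α, CompleteLattice (L α)]
    (h : ∀ α β : Idx κ, β < α → L α → L β) : Set (∀ α, L α) :=
  {x | ∀ (α β : Idx κ) (hβα : β < α), h α β hβα (x α) = x β}

/-- Auxiliary compatible sequence: below β push `x` forward, above β take the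
largest element of the fiber over `x`, at β take `x` itself. -/
noncomputable def tAux {κ : Ordinal} (L : Idx κ → Type u) [∀ α, CompleteLattice (L α)]
    (h : ∀ α β : Idx κ, β < α → L α → L β) (β : Idx κ) (x : L β) : ∀ γ : Idx κ, L γ :=
  fun γ =>
    if hlt : γ < β then h β γ hlt x
    else if hgt : β < γ then sSup {w | h γ β hgt w = x}
    else cast (congrArg L (le_antisymm (not_lt.mp hgt) (not_lt.mp hlt))).symm x

lemma tAux_lt {κ : Ordinal} (L : Idx κ → Type u) [∀ α, CompleteLattice (L α)]
    (h : ∀ α β : Idx κ, β < α → L α → L β) (β : Idx κ) (x : L β) {γ : Idx κ}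
    (hlt : γ < β) : tAux L h β x γ = h β γ hlt x := dif_pos hlt

lemma tAux_gt {κ : Ordinal} (L : Idx κ → Type u) [∀ α, CompleteLattice (L α)]
    (h : ∀ α β : Idx κ, β < α → L α → L β) (β : Idx κ) (x : L β) {γ : Idx κ}
    (hgt : β < γ) : tAux L h β x γ = sSup {w | h γ β hgt w = x} := by
  unfold tAux
  rw [dif_neg (lt_asymm hgt), dif_pos hgt]

lemma tAux_self {κ : Ordinal} (L : Idx κ → Type u) [∀ α, CompleteLattice (L α)]
    (h : ∀ α β : Idx κ, β < α → L α → L β) (β : Idx κ) (x : L β) :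
    tAux L h β x β = x := by
  unfold tAux
  rw [dif_neg (lt_irrefl β), dif_neg (lt_irrefl β)]
  exact cast_eq _ x

/-- if the projections of the inverse system are locally completely
additive, then so are the limit projections (evaluations at a component): whenever a
nonempty family of compatible sequences all have β-component x, any least upper
bound of the family inside the inverse limit has β-component x. -/
theorem limit_projections_locally_completely_additive
    {κ : Ordinal} (hκ : Order.IsSuccLimit κ)
    (L : Idx κ → Type u) [∀ α, CompleteLattice (L α)]
    (h : ∀ α β : Idx κ, β < α → L α → L β)
    (proj : ∀ (α β : Idx κ) (hβα : β < α), ∃ k : L β → L α,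
        Monotone (h α β hβα) ∧ Monotone k ∧
        (∀ x, h α β hβα (k x) = x) ∧ (∀ y, k (h α β hβα y) ≤ y))
    (comp : ∀ (α β γ : Idx κ) (hγβ : γ < β) (hβα : β < α) (x : L α),
        h β γ hγβ (h α β hβα x) = h α γ (hγβ.trans hβα) x)
    (lca : ∀ (α β : Idx κ) (hβα : β < α), ∀ Y : Set (L α), Y.Nonempty →
        ∀ x : L β, (∀ y ∈ Y, h α β hβα y = x) → h α β hβα (sSup Y) = x) :
    ∀ β : Idx κ, ∀ Y ⊆ Compat L h, Y.Nonempty →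
      ∀ x : L β, (∀ y ∈ Y, y β = x) →
      ∀ z, IsLeast {u ∈ Compat L h | ∀ y ∈ Y, y ≤ u} z → z β = x := by
  intro β Y hYsub hYne x hx z hz
  obtain ⟨y₀, hy₀⟩ := hYne
  -- every fiber above β is nonempty
  have hSne : ∀ γ : Idx κ, ∀ hgt : β < γ, ({w | h γ β hgt w = x}).Nonempty := by
    intro γ hgt
    obtain ⟨k, -, -, hk, -⟩ := proj γ β hgt
    exact ⟨k x, hk x⟩
  -- the sup of a fiber is in the fiber
  have hFx : ∀ γ : Idx κ, ∀ hgt : β < γ,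
      h γ β hgt (sSup {w | h γ β hgt w = x}) = x := by
    intro γ hgt
    exact lca γ β hgt _ (hSne γ hgt) x (fun w hw => hw)
  set t : ∀ γ : Idx κ, L γ := tAux L h β x with ht
  -- t is compatible
  have htC : t ∈ Compat L h := by
    intro γ δ hδγ
    rcases lt_trichotomy δ β with hδ | hδ | hδ
    · rcases lt_trichotomy γ β with hγ | hγ | hγ
      · -- δ < γ < β
        rw [ht, tAux_lt L h β x hγ, tAux_lt L h β x hδ]
        exact comp β γ δ hδγ hγ x
      · -- γ = β
        subst hγ
        rw [ht, tAux_self L h γ x, tAux_lt L h γ x hδ]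
      · -- δ < β < γ
        rw [ht, tAux_gt L h β x hγ, tAux_lt L h β x hδ,
          ← comp γ β δ hδ hγ (sSup {w | h γ β hγ w = x}), hFx γ hγ]
    · -- δ = β
      subst hδ
      have hγ : δ < γ := hδγ
      rw [ht, tAux_gt L h δ x hγ, tAux_self L h δ x]
      exact hFx γ hγ
    · -- β < δ < γ
      have hγ : β < γ := hδ.trans hδγ
      rw [ht, tAux_gt L h β x hγ, tAux_gt L h β x hδ]
      obtain ⟨k, hm, hkm, hhk, hkh⟩ := proj γ δ hδγ
      apply le_antisymm
      · apply le_sSup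
        show h δ β hδ (h γ δ hδγ (sSup {w | h γ β hγ w = x})) = x
        rw [comp γ δ β hδ hδγ]
        exact hFx γ hγ
      · have h1 : k (sSup {w | h δ β hδ w = x}) ∈ {w | h γ β hγ w = x} := by
          show h γ β hγ (k _) = x
          rw [← comp γ δ β hδ hδγ, hhk]
          exact hFx δ hδ
        calc sSup {w | h δ β hδ w = x}
            = h γ δ hδγ (k (sSup {w | h δ β hδ w = x})) := (hhk _).symm
          _ ≤ h γ δ hδγ (sSup {w | h γ β hγ w = x}) := hm (le_sSup h1)
  -- t is an upper bound of Y
  have htUB : ∀ y ∈ Y, y ≤ t := by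
    intro y hy γ
    rcases lt_trichotomy γ β with hγ | hγ | hγ
    · rw [ht, tAux_lt L h β x hγ, ← hx y hy, ← hYsub hy β γ hγ]
    · subst hγ
      rw [ht, tAux_self L h γ x, ← hx y hy]
    · rw [ht, tAux_gt L h β x hγ]
      apply le_sSup
      show h γ β hγ (y γ) = x
      rw [hYsub hy γ β hγ, hx y hy]
  -- squeeze
  have h1 : z β ≤ x := by
    have := hz.2 ⟨htC, htUB⟩ β
    rwa [ht, tAux_self L h β x] at this
  have h2 : x ≤ z β := by
    rw [← hx y₀ hy₀]
    exact hz.1.2 y₀ hy₀ β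
  exact le_antisymm h1 h2
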